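/- arXiv:2111.04332 — 4 statements merged into one kernel-verified Lean document; each statement's English description precedes it below -/
import Mathlib

section
/- Let T be a rooted tree labeled by pre-order traversal, and let P be a path in T with endpoints l ≤ r and let a be a node with l in the subtree rooted at a. If lca(l,r) < a, then r lies in the interval [rmost_leaf(a)+1, n], where rmost_leaf(a) is the maximum pre-order label in the subtree rooted at a. Moreover, r is not in the subtree rooted at a and a lies on the path P. -/
open Classical

/-- A rooted tree on `n` nodes, given by a parent function. -/
structure RTree (n : ℕ) where
  parent : Fin n → Fin n
  root : Fin n
  parent_root : parent root = root
  reaches_root : ∀ v, ∃ k, parent^[k] v = root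

namespace RTree

variable {n : ℕ}

/-- `a` is an ancestor of `v` (possibly `a = v`). -/
def isAncestor (T : RTree n) (a v : Fin n) : Prop := ∃ k, T.parent^[k] v = a

/-- The set of nodes in the subtree rooted at `a`. -/
noncomputable def subtree (T : RTree n) (a : Fin n) : Finset (Fin n) :=
  Finset.univ.filter fun v => T.isAncestor a v

/-- Distance from `v` to the root. -/
noncomputable def depth (T : RTree n) (v : Fin n) : ℕ := Nat.find (T.reaches_root v)

/-- `v` is a child of `u`. -/
def isChild (T : RTree n) (v u : Fin n) : Prop := v ≠ T.root ∧ T.parent v = u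

/-- `heavy` assigns to each internal node a child of maximum subtree size (heavy child). -/
def IsHeavyChoice (T : RTree n) (heavy : Fin n → Fin n) : Prop :=
  ∀ u : Fin n, (∃ c, T.isChild c u) →
    T.isChild (heavy u) u ∧
      ∀ c, T.isChild c u → (T.subtree c).card ≤ (T.subtree (heavy u)).card

/-- The edge from `v` to its parent is a light edge. -/
def isLightTop (T : RTree n) (heavy : Fin n → Fin n) (v : Fin n) : Prop :=
  v ≠ T.root ∧ heavy (T.parent v) ≠ v

/-- `{x, y}` is a light edge of `T`. -/
def isLightEdge (T : RTree n) (heavy : Fin n → Fin n) (x y : Fin n) : Prop :=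
  (T.isChild x y ∧ heavy y ≠ x) ∨ (T.isChild y x ∧ heavy x ≠ y)

lemma parent_fix_eq_root (T : RTree n) (a : Fin n) (h : T.parent a = a) : a = T.root := by
  obtain ⟨k, hk⟩ := T.reaches_root a
  have h2 : T.parent^[k] a = a := Function.iterate_fixed h k
  rw [h2] at hk; exact hk

/-- The graph on the nodes of `T` whose edges are exactly the heavy edges. -/
def heavyGraph (T : RTree n) (heavy : Fin n → Fin n) : SimpleGraph (Fin n) where
  Adj x y := (T.isChild x y ∧ heavy y = x) ∨ (T.isChild y x ∧ heavy x = y)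
  symm := by constructor; intro x y h; tauto
  loopless := by
    constructor
    intro x h
    rcases h with ⟨⟨hne, hp⟩, _⟩ | ⟨⟨hne, hp⟩, _⟩ <;> exact hne (T.parent_fix_eq_root x hp)

/-- `a` and `b` lie on the same heavy path of the heavy path decomposition. -/
def sameHP (T : RTree n) (heavy : Fin n → Fin n) (a b : Fin n) : Prop :=
  (T.heavyGraph heavy).Reachable a b

lemma exists_common_ancestor (T : RTree n) (a b : Fin n) :
    ∃ m, T.isAncestor (T.parent^[m] a) b := by
  refine ⟨T.depth a, T.depth b, ?_⟩
  have h1 : T.parent^[T.depth b] b = T.root := Nat.find_spec (T.reaches_root b)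
  have h2 : T.parent^[T.depth a] a = T.root := Nat.find_spec (T.reaches_root a)
  rw [h1, h2]

/-- The lowest common ancestor of `a` and `b`. -/
noncomputable def lca (T : RTree n) (a b : Fin n) : Fin n :=
  T.parent^[Nat.find (T.exists_common_ancestor a b)] a

/-- The vertex set of the unique simple path between `a` and `b` in `T`. -/
def pathSet (T : RTree n) (a b : Fin n) : Set (Fin n) :=
  {w | (T.isAncestor w a ∨ T.isAncestor w b) ∧ T.isAncestor (T.lca a b) w}

lemma self_mem_subtree (T : RTree n) (a : Fin n) : a ∈ T.subtree a := by
  simp only [subtree, Finset.mem_filter, Finset.mem_univ, true_and]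
  exact ⟨0, rfl⟩

/-- The largest pre-order label in the subtree rooted at `a`. -/
noncomputable def rmostLeaf (T : RTree n) (a : Fin n) : Fin n :=
  (T.subtree a).max' ⟨a, T.self_mem_subtree a⟩

/-- The labels `1..n` of `T` form a pre-order (DFS) labelling. -/
def IsPreorder (T : RTree n) : Prop :=
  (∀ v, v ≠ T.root → T.parent v < v) ∧
    (∀ u v w : Fin n, u < v → v < w → T.isAncestor u w → T.isAncestor u v)

/-- Number of light edges on the path from the root to `v`
(the level of the heavy path of `v` in the heavy path tree). -/
noncomputable def lightDepth (T : RTree n) (heavy : Fin n → Fin n) (v : Fin n) : ℕ :=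
  ((Finset.range (T.depth v)).filter fun k => T.isLightTop heavy (T.parent^[k] v)).card

end RTree


namespace RTree

lemma parent_le' (T : RTree n) (hpre : T.IsPreorder) (v : Fin n) : T.parent v ≤ v := by
  by_cases h : v = T.root
  · rw [h, T.parent_root]
  · exact le_of_lt (hpre.1 v h)

lemma iter_le' (T : RTree n) (hpre : T.IsPreorder) (k : ℕ) (v : Fin n) :
    T.parent^[k] v ≤ v := by
  induction k with
  | zero => simp
  | succ k ih =>
    rw [Function.iterate_succ_apply']
    exact le_trans (T.parent_le' hpre _) ih

lemma anc_le' (T : RTree n) (hpre : T.IsPreorder) {a v : Fin n}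
    (h : T.isAncestor a v) : a ≤ v := by
  obtain ⟨k, hk⟩ := h
  rw [← hk]; exact T.iter_le' hpre k v

end RTree


/-- pre-order labeled tree, path `P` with endpoints `l ≤ r`, `l` in the subtree
rooted at `a`. If `lca(l,r) < a` then `r` lies after `rmost_leaf a` (i.e. in
`[rmost_leaf a + 1, n]`); moreover `r` is not in the subtree rooted at `a`, and `a` lies on
the path `P`. -/
theorem stmt6 {n : ℕ} (T : RTree n) (hpre : T.IsPreorder) (l r a : Fin n)
    (hlr : l ≤ r) (hla : l ∈ T.subtree a) (hlca : T.lca l r < a) :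
    T.rmostLeaf a < r ∧ r ∉ T.subtree a ∧ a ∈ T.pathSet l r := by
  obtain ⟨k, hk⟩ : T.isAncestor a l := by
    simpa [RTree.subtree] using hla
  have hal : T.isAncestor a l := ⟨k, hk⟩
  have haler : a ≤ l := T.anc_le' hpre hal
  set P := T.exists_common_ancestor l r with hP
  have hlca_def : T.lca l r = T.parent^[Nat.find P] l := rfl
  set m := Nat.find P with hm
  -- key: ¬ (m ≤ k)
  have hkm : ¬ m ≤ k := by
    intro hle
    have : a = T.parent^[k - m] (T.lca l r) := by
      rw [hlca_def, ← Function.iterate_add_apply, Nat.sub_add_cancel hle, hk]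
    have : a ≤ T.lca l r := by
      rw [this]; exact T.iter_le' hpre _ _
    exact absurd hlca (not_lt.mpr this)
  have hkltm : k < m := not_le.mp hkm
  -- a is not an ancestor of r
  have hnar : ¬ T.isAncestor a r := by
    intro har
    have : T.isAncestor (T.parent^[k] l) r := by rw [hk]; exact har
    exact hkm (Nat.find_min' P this)
  have hrns : r ∉ T.subtree a := by
    intro hr
    exact hnar (by simpa [RTree.subtree] using hr)
  -- rmostLeaf a < r
  have hrm_mem : T.rmostLeaf a ∈ T.subtree a := Finset.max'_mem _ _
  have harm : T.isAncestor a (T.rmostLeaf a) := by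
    simpa [RTree.subtree] using hrm_mem
  have hlrm : l ≤ T.rmostLeaf a := Finset.le_max' _ _ hla
  have hrmr : T.rmostLeaf a < r := by
    by_contra hle
    push_neg at hle
    have har : T.isAncestor a r := by
      rcases eq_or_lt_of_le (haler.trans hlr) with heq | hltar
      · exact ⟨0, heq.symm⟩
      rcases eq_or_lt_of_le hle with heq | hltr
      · rw [← heq] at harm; exact harm
      · exact hpre.2 a r (T.rmostLeaf a) hltar hltr harm
    exact hnar har
  refine ⟨hrmr, hrns, ?_, ?_⟩
  · exact Or.inl hal
  · refine ⟨m - k, ?_⟩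
    rw [hlca_def, ← hk, ← Function.iterate_add_apply, Nat.sub_add_cancel (le_of_lt hkltm)]
end

section
/- Let T be a rooted tree with heavy path decomposition and heavy path tree 𝒯. Let P_v be any path in T. Then P_v has non-empty intersection with at most two heavy paths whose corresponding nodes lie at any fixed level l of 𝒯. -/
open Classical

namespace RTree

variable {n : ℕ}

lemma depth_eq_succ (T : RTree n) (v : Fin n) (hv : v ≠ T.root) :
    T.depth v = T.depth (T.parent v) + 1 := by
  have hup : T.parent^[T.depth (T.parent v) + 1] v = T.root := by
    rw [Function.iterate_succ_apply]
    exact Nat.find_spec (T.reaches_root (T.parent v))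
  have h1 : T.depth v ≤ T.depth (T.parent v) + 1 := Nat.find_min' _ hup
  have h0 : T.depth v ≠ 0 := by
    intro h
    have hs : T.parent^[T.depth v] v = T.root := Nat.find_spec (T.reaches_root v)
    rw [h] at hs
    exact hv hs
  obtain ⟨m, hm⟩ := Nat.exists_eq_succ_of_ne_zero h0
  have hspec : T.parent^[m + 1] v = T.root := by
    have := Nat.find_spec (T.reaches_root v)
    rwa [show Nat.find (T.reaches_root v) = T.depth v from rfl, hm] at this
  rw [Function.iterate_succ_apply] at hspec
  have h2 : T.depth (T.parent v) ≤ m := Nat.find_min' _ hspec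
  omega

lemma lightDepth_rec (T : RTree n) (heavy : Fin n → Fin n) (v : Fin n) :
    T.lightDepth heavy v =
      T.lightDepth heavy (T.parent v) + (if T.isLightTop heavy v then 1 else 0) := by
  by_cases hv : v = T.root
  · have hpv : T.parent v = v := by rw [hv]; exact T.parent_root
    have hd : T.depth v = 0 := by
      have h0 : T.parent^[0] v = T.root := hv
      exact Nat.le_zero.mp (Nat.find_min' (T.reaches_root v) h0)
    have hlt : ¬ T.isLightTop heavy v := fun h => h.1 hv
    simp [lightDepth, hpv, hd, hlt]
  · have hd := T.depth_eq_succ v hv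
    unfold lightDepth
    rw [hd, Finset.card_filter, Finset.card_filter, Finset.sum_range_succ']
    simp only [Function.iterate_succ_apply, Function.iterate_zero_apply]
    congr

lemma lightDepth_parent_le (T : RTree n) (heavy : Fin n → Fin n) (v : Fin n) :
    T.lightDepth heavy (T.parent v) ≤ T.lightDepth heavy v := by
  rw [T.lightDepth_rec heavy v]; omega

lemma lightDepth_iterate_le (T : RTree n) (heavy : Fin n → Fin n) (v : Fin n) (j : ℕ) :
    T.lightDepth heavy (T.parent^[j] v) ≤ T.lightDepth heavy v := by
  induction j with
  | zero => exact le_rfl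
  | succ j ih =>
    rw [Function.iterate_succ_apply']
    exact (T.lightDepth_parent_le heavy _).trans ih

lemma sameHP_of_chain (T : RTree n) (heavy : Fin n → Fin n) (w : Fin n) (j : ℕ)
    (h : T.lightDepth heavy (T.parent^[j] w) = T.lightDepth heavy w) :
    T.sameHP heavy w (T.parent^[j] w) := by
  induction j with
  | zero => exact SimpleGraph.Reachable.refl w
  | succ j ih =>
    rw [Function.iterate_succ_apply'] at h ⊢
    have h1 : T.lightDepth heavy (T.parent (T.parent^[j] w)) ≤
        T.lightDepth heavy (T.parent^[j] w) :=
      T.lightDepth_parent_le heavy (T.parent^[j] w)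
    have h2 : T.lightDepth heavy (T.parent^[j] w) ≤ T.lightDepth heavy w :=
      T.lightDepth_iterate_le heavy w j
    have heq : T.lightDepth heavy (T.parent^[j] w) = T.lightDepth heavy w := by omega
    have hwv : T.sameHP heavy w (T.parent^[j] w) := ih heq
    by_cases hr : T.parent^[j] w = T.root
    · have hp : T.parent (T.parent^[j] w) = T.parent^[j] w := by
        rw [hr]; exact T.parent_root
      rwa [hp]
    · have hnl : ¬ T.isLightTop heavy (T.parent^[j] w) := by
        have hrec := T.lightDepth_rec heavy (T.parent^[j] w)
        intro hc
        rw [if_pos hc] at hrec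
        omega
      have hheavy : heavy (T.parent (T.parent^[j] w)) = T.parent^[j] w := by
        by_contra hc
        exact hnl ⟨hr, hc⟩
      have hadj : (T.heavyGraph heavy).Adj (T.parent^[j] w) (T.parent (T.parent^[j] w)) :=
        Or.inl ⟨⟨hr, rfl⟩, hheavy⟩
      exact hwv.trans hadj.reachable

lemma sameHP_of_iterates (T : RTree n) (heavy : Fin n → Fin n) (a : Fin n) (k k' : ℕ)
    (h : T.lightDepth heavy (T.parent^[k] a) = T.lightDepth heavy (T.parent^[k'] a)) :
    T.sameHP heavy (T.parent^[k] a) (T.parent^[k'] a) := by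
  rcases le_total k k' with hle | hle
  · have hiter : T.parent^[k'] a = T.parent^[k' - k] (T.parent^[k] a) := by
      rw [← Function.iterate_add_apply]
      congr 1
      omega
    rw [hiter] at h ⊢
    exact T.sameHP_of_chain heavy _ _ h.symm
  · have hiter : T.parent^[k] a = T.parent^[k - k'] (T.parent^[k'] a) := by
      rw [← Function.iterate_add_apply]
      congr 1
      omega
    rw [hiter] at h ⊢
    exact (T.sameHP_of_chain heavy _ _ h).symm

end RTree

/-- a path `P` in `T` has non-empty intersection with at most two heavy paths
lying at any fixed level `l` of the heavy path tree (the level of a heavy path being the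
number of light edges from the root to any of its members). -/
theorem stmt12 {n : ℕ} (T : RTree n) (heavy : Fin n → Fin n) (hh : T.IsHeavyChoice heavy)
    (a b : Fin n) (l : ℕ) :
    {S : Set (Fin n) | (∃ u, S = {w | T.sameHP heavy u w}) ∧
        ∃ w ∈ T.pathSet a b, w ∈ S ∧ T.lightDepth heavy w = l}.ncard ≤ 2 := by
  classical
  set C : Fin n → Set (Fin n) := fun u => {w | T.sameHP heavy u w} with hC
  have hclass : ∀ u w : Fin n, T.sameHP heavy u w → C u = C w := by
    intro u w h
    ext x
    exact ⟨fun hx => h.symm.trans hx, fun hx => h.trans hx⟩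
  set Sa : Set (Fin n) :=
    if h : ∃ k, T.lightDepth heavy (T.parent^[k] a) = l then C (T.parent^[h.choose] a)
    else ∅ with hSa
  set Sb : Set (Fin n) :=
    if h : ∃ k, T.lightDepth heavy (T.parent^[k] b) = l then C (T.parent^[h.choose] b)
    else ∅ with hSb
  have hsub : {S : Set (Fin n) | (∃ u, S = {w | T.sameHP heavy u w}) ∧
      ∃ w ∈ T.pathSet a b, w ∈ S ∧ T.lightDepth heavy w = l} ⊆ {Sa, Sb} := by
    rintro S ⟨⟨u, rfl⟩, w, hw, hwS, hl⟩
    have hSw : C u = C w := hclass u w hwS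
    rcases hw.1 with ⟨k, hk⟩ | ⟨k, hk⟩
    · left
      have ha : ∃ k, T.lightDepth heavy (T.parent^[k] a) = l := ⟨k, by rw [hk]; exact hl⟩
      have h2 : T.sameHP heavy (T.parent^[ha.choose] a) (T.parent^[k] a) :=
        T.sameHP_of_iterates heavy a _ _ (by rw [ha.choose_spec, hk, hl])
      calc C u = C w := hSw
        _ = C (T.parent^[k] a) := by rw [hk]
        _ = C (T.parent^[ha.choose] a) := (hclass _ _ h2).symm
        _ = Sa := by rw [hSa, dif_pos ha]
    · right
      have hb : ∃ k, T.lightDepth heavy (T.parent^[k] b) = l := ⟨k, by rw [hk]; exact hl⟩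
      have h2 : T.sameHP heavy (T.parent^[hb.choose] b) (T.parent^[k] b) :=
        T.sameHP_of_iterates heavy b _ _ (by rw [hb.choose_spec, hk, hl])
      have : C u = Sb := by
        calc C u = C w := hSw
          _ = C (T.parent^[k] b) := by rw [hk]
          _ = C (T.parent^[hb.choose] b) := (hclass _ _ h2).symm
          _ = Sb := by rw [hSb, dif_pos hb]
      simpa using this
  have hfin : ({Sa, Sb} : Set (Set (Fin n))).Finite :=
    (Set.finite_singleton Sb).insert Sa
  calc _ ≤ ({Sa, Sb} : Set (Set (Fin n))).ncard := Set.ncard_le_ncard hsub hfin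
    _ ≤ ({Sb} : Set (Set (Fin n))).ncard + 1 := Set.ncard_insert_le _ _
    _ ≤ 2 := by rw [Set.ncard_singleton]
end

section
/- Let T be a tree with heavy path decomposition and let P_u, P_v be paths in T. Then P_u and P_v intersect (share a vertex) if and only if either (1) there is a light edge {w,w'} of T such that both P_u and P_v contain both endpoints' heavy paths, i.e., both intersect H_w and H_{w'} where {Φ(H_w),Φ(H_{w'})} is an edge of the heavy path tree, or (2) there exists a heavy path H such that the paths P_u ∩ H and P_v ∩ H are both nonempty and intersect each other. -/
open Classical

namespace RTree

variable {n : ℕ}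

lemma anc_trans (T : RTree n) {a b c : Fin n} (h1 : T.isAncestor a b)
    (h2 : T.isAncestor b c) : T.isAncestor a c := by
  obtain ⟨k, hk⟩ := h1; obtain ⟨j, hj⟩ := h2
  exact ⟨k + j, by rw [Function.iterate_add_apply, hj, hk]⟩

lemma periodic_eq_root (T : RTree n) {a : Fin n} {m : ℕ} (hm : 1 ≤ m)
    (h : T.parent^[m] a = a) : a = T.root := by
  have hd : T.parent^[T.depth a] a = T.root := Nat.find_spec (T.reaches_root a)
  have hstep : ∀ t, T.parent^[m * t] a = a := by
    intro t
    induction t with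
    | zero => simp
    | succ t ih =>
      rw [Nat.mul_succ, Function.iterate_add_apply, h, ih]
  have hle : T.depth a ≤ m * T.depth a := Nat.le_mul_of_pos_left _ hm
  have : T.parent^[m * T.depth a] a = T.root := by
    rw [← Nat.sub_add_cancel hle, Function.iterate_add_apply, hd,
      Function.iterate_fixed T.parent_root]
  rw [hstep (T.depth a)] at this
  exact this

lemma anc_antisymm (T : RTree n) {a b : Fin n} (h1 : T.isAncestor a b)
    (h2 : T.isAncestor b a) : a = b := by
  obtain ⟨k, hk⟩ := h1; obtain ⟨j, hj⟩ := h2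
  rcases Nat.eq_zero_or_pos (k + j) with h0 | hpos
  · obtain ⟨hk0, hj0⟩ := Nat.add_eq_zero.mp h0
    subst hk0; exact hk.symm
  · have ha : T.parent^[k + j] a = a := by
      rw [Function.iterate_add_apply, hj, hk]
    have hb : T.parent^[j + k] b = b := by
      rw [Function.iterate_add_apply, hk, hj]
    rw [T.periodic_eq_root hpos ha, T.periodic_eq_root (by omega) hb]

lemma anc_comparable (T : RTree n) {x L a : Fin n} (h1 : T.isAncestor x a)
    (h2 : T.isAncestor L a) : T.isAncestor x L ∨ T.isAncestor L x := by
  obtain ⟨i, hi⟩ := h1; obtain ⟨j, hj⟩ := h2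
  rcases le_total i j with h | h
  · right
    exact ⟨j - i, by rw [← hi, ← Function.iterate_add_apply, Nat.sub_add_cancel h, hj]⟩
  · left
    exact ⟨i - j, by rw [← hj, ← Function.iterate_add_apply, Nat.sub_add_cancel h, hi]⟩

/-- A set closed under adjacency contains everything reachable from a member. -/
lemma walk_closed {V : Type*} {G : SimpleGraph V} {S : Set V}
    (hS : ∀ u v, u ∈ S → G.Adj u v → v ∈ S) :
    ∀ {a b : V}, G.Walk a b → a ∈ S → b ∈ S
  | _, _, .nil, ha => ha
  | _, _, .cons h p, ha => walk_closed hS p (hS _ _ ha h)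

lemma reach_closed {V : Type*} {G : SimpleGraph V} {S : Set V}
    (hS : ∀ u v, u ∈ S → G.Adj u v → v ∈ S) {a b : V}
    (h : G.Reachable a b) (ha : a ∈ S) : b ∈ S := by
  obtain ⟨p⟩ := h
  exact walk_closed hS p ha

/-- If `x` is the top of its heavy path, everything on `H_x` is a descendant of `x`. -/
lemma top_anc (T : RTree n) (heavy : Fin n → Fin n) {x : Fin n}
    (hl : heavy (T.parent x) ≠ x) {w : Fin n} (h : T.sameHP heavy x w) :
    T.isAncestor x w := by
  refine reach_closed (S := {w | T.isAncestor x w}) ?_ h ⟨0, rfl⟩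
  rintro u v hu (⟨⟨_, hpu⟩, hhv⟩ | ⟨⟨_, hpv⟩, _⟩)
  · obtain ⟨k, hk⟩ := hu
    cases k with
    | zero =>
      simp only [Function.iterate_zero, id] at hk
      subst hk
      exact absurd (hpu ▸ hhv) hl
    | succ m =>
      exact ⟨m, by rw [← hk, Function.iterate_succ_apply, hpu]⟩
  · obtain ⟨k, hk⟩ := hu
    exact ⟨k + 1, by rw [Function.iterate_succ_apply, hpv, hk]⟩

/-- If `{x, parent x}` is a light edge, then `H_{parent x}` is disjoint
from the subtree of `x`. -/
lemma hp_parent_not_anc (T : RTree n) (heavy : Fin n → Fin n) {x y : Fin n}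
    (hc : T.isChild x y) (hl : heavy y ≠ x) {w : Fin n}
    (h : T.sameHP heavy y w) : ¬ T.isAncestor x w := by
  refine reach_closed (S := {w | ¬ T.isAncestor x w}) ?_ h ?_
  · rintro u v hu (⟨⟨_, hpu⟩, _⟩ | ⟨⟨_, hpv⟩, hhv⟩) hxv
    · exact hu (T.anc_trans hxv ⟨1, by simp [hpu]⟩)
    · obtain ⟨k, hk⟩ := hxv
      cases k with
      | zero =>
        simp only [Function.iterate_zero, id] at hk
        subst hk
        have : u = y := by rw [← hc.2, hpv]
        exact hl (this ▸ hhv)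
      | succ m =>
        exact hu ⟨m, by rw [← hk, Function.iterate_succ_apply, hpv]⟩
  · intro hxy
    have hyx : T.isAncestor y x := ⟨1, by simp [hc.2]⟩
    have : x = y := T.anc_antisymm hxy hyx
    exact hc.1 (T.parent_fix_eq_root x (by rw [hc.2, ← this]))

/-- If a path contains a descendant of `x` and a non-descendant of `x`,
it contains `x`. -/
lemma cross_mem (T : RTree n) {p q a b x : Fin n} (ha : a ∈ T.pathSet p q)
    (hb : b ∈ T.pathSet p q) (hxa : T.isAncestor x a) (hxb : ¬ T.isAncestor x b) :
    x ∈ T.pathSet p q := by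
  obtain ⟨ha1, ha2⟩ := ha
  obtain ⟨hb1, hb2⟩ := hb
  rcases T.anc_comparable hxa ha2 with hxL | hLx
  · exact absurd (T.anc_trans hxL hb2) hxb
  · refine ⟨?_, hLx⟩
    rcases ha1 with h | h
    · exact Or.inl (T.anc_trans hxa h)
    · exact Or.inr (T.anc_trans hxa h)

end RTree

/-- two paths `P_u` (between `u1, u2`) and `P_v` (between `v1, v2`) share a
vertex iff either (1) there is a light edge `{x, y}` of `T` such that both paths intersect
both heavy paths `H_x` and `H_y`, or (2) there is a heavy path `H` such that `P_u ∩ H` and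
`P_v ∩ H` are both nonempty and intersect each other. -/
theorem stmt13 {n : ℕ} (T : RTree n) (heavy : Fin n → Fin n) (hh : T.IsHeavyChoice heavy)
    (u1 u2 v1 v2 : Fin n) :
    (T.pathSet u1 u2 ∩ T.pathSet v1 v2).Nonempty ↔
      ((∃ x y : Fin n, T.isChild x y ∧ heavy y ≠ x ∧
          (T.pathSet u1 u2 ∩ {w | T.sameHP heavy x w}).Nonempty ∧
          (T.pathSet u1 u2 ∩ {w | T.sameHP heavy y w}).Nonempty ∧
          (T.pathSet v1 v2 ∩ {w | T.sameHP heavy x w}).Nonempty ∧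
          (T.pathSet v1 v2 ∩ {w | T.sameHP heavy y w}).Nonempty) ∨
        (∃ h : Fin n,
          (T.pathSet u1 u2 ∩ {w | T.sameHP heavy h w}).Nonempty ∧
          (T.pathSet v1 v2 ∩ {w | T.sameHP heavy h w}).Nonempty ∧
          (T.pathSet u1 u2 ∩ T.pathSet v1 v2 ∩ {w | T.sameHP heavy h w}).Nonempty)) := by
  constructor
  · rintro ⟨w, hwu, hwv⟩
    exact Or.inr ⟨w, ⟨w, hwu, SimpleGraph.Reachable.refl w⟩,
      ⟨w, hwv, SimpleGraph.Reachable.refl w⟩,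
      ⟨w, ⟨hwu, hwv⟩, SimpleGraph.Reachable.refl w⟩⟩
  · rintro (⟨x, y, hc, hl, ⟨a, hau, hax⟩, ⟨b, hbu, hby⟩, ⟨c, hcv, hcx⟩, ⟨d, hdv, hdy⟩⟩ |
      ⟨h, _, _, ⟨w, hw, _⟩⟩)
    · have hlt : heavy (T.parent x) ≠ x := by rw [hc.2]; exact hl
      have hxu : x ∈ T.pathSet u1 u2 :=
        T.cross_mem hau hbu (T.top_anc heavy hlt hax) (T.hp_parent_not_anc heavy hc hl hby)
      have hxv : x ∈ T.pathSet v1 v2 :=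
        T.cross_mem hcv hdv (T.top_anc heavy hlt hcx) (T.hp_parent_not_anc heavy hc hl hdy)
      exact ⟨x, hxu, hxv⟩
    · exact ⟨w, hw⟩
end

section
/- Every maximal clique of a chordal graph contains a simplicial vertex of the graph, or fails to be contained in any other maximal clique; consequently, in a clique tree T of a path graph G, for every node a of T there exists a path P = (l, r) in the path representation such that lca(l,r) = a, where T is rooted arbitrarily. -/
open Classical

/-- clique tree setting. `T` is a (rooted) clique tree on `N` nodes of a path
graph on `m` vertices, vertex `v` corresponding to the path between `L v` and `R v`.
The clique of a node `a` is `C a = {v | a ∈ P_v}`. The hypotheses say each node's clique is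
nonempty and is a *maximal* clique (not contained in the clique of any other node).
Then for every node `a` of `T` there exists a path `P_v` whose endpoints have `lca` exactly
`a`. -/
theorem stmt14 {N m : ℕ} (T : RTree N) (L R : Fin m → Fin N)
    (hnonempty : ∀ a : Fin N, ∃ v : Fin m, a ∈ T.pathSet (L v) (R v))
    (hmax : ∀ a b : Fin N, a ≠ b →
      ∃ v : Fin m, a ∈ T.pathSet (L v) (R v) ∧ b ∉ T.pathSet (L v) (R v)) :
    ∀ a : Fin N, ∃ v : Fin m, T.lca (L v) (R v) = a := by
  intro a
  by_cases ha : a = T.root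
  · obtain ⟨v, hv⟩ := hnonempty a
    obtain ⟨-, k, hk⟩ := hv
    subst ha
    rw [Function.iterate_fixed T.parent_root k] at hk
    exact ⟨v, hk.symm⟩
  · have hne : a ≠ T.parent a := fun h => ha (T.parent_fix_eq_root a h.symm)
    obtain ⟨v, hv, hpar⟩ := hmax a (T.parent a) hne
    refine ⟨v, ?_⟩
    by_contra hlca
    obtain ⟨hanc, k, hk⟩ := hv
    apply hpar
    have hk0 : k ≠ 0 := by
      intro h; subst h; exact hlca hk.symm
    obtain ⟨k', rfl⟩ := Nat.exists_eq_succ_of_ne_zero hk0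
    constructor
    · rcases hanc with ⟨j, hj⟩ | ⟨j, hj⟩
      · exact Or.inl ⟨j + 1, by rw [Function.iterate_succ_apply', hj]⟩
      · exact Or.inr ⟨j + 1, by rw [Function.iterate_succ_apply', hj]⟩
    · exact ⟨k', by rw [← Function.iterate_succ_apply]; exact hk⟩
end
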